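/- Let F be a field of characteristic zero, n, r ≥ 1 integers, and x ∈ (Fⁿ)ʳ. Let Σ ⊆ ℕʳ be a finite set such that the vectors {χ_σ(x) : σ ∈ Σ} span an F-subspace of Fⁿ of dimension strictly greater than n/2. Let W ⊆ Fⁿ be the F-span of {χ_σ(x) : σ ∈ Σ + Σ}. Then the orthogonal complement of W with respect to the bilinear form (u, v) ↦ Tr(u·v) = Σ_{j=1}^n u_j v_j is contained in a coordinate hyperplane: there exists j ∈ {1,…,n} such that every w ∈ Fⁿ satisfying Tr(u·w) = 0 for all u ∈ W has w_j = 0. -/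

import Mathlib

open Module Pointwise

/-- The multisymmetric monomial map `χ_σ`: the coordinatewise product
`x_1^{σ_1} ⋯ x_r^{σ_r}` of the rows of `x`. -/
def chiMap {F : Type*} [CommRing F] {n r : ℕ} (σ : Fin r → ℕ) (x : Fin r → Fin n → F) :
    Fin n → F :=
  fun j => ∏ k, x k j ^ σ k

/-- The trace map `Fⁿ → F`, the sum of the coordinates. -/
def trMap {F : Type*} [CommRing F] {n : ℕ} (v : Fin n → F) : F := ∑ j, v j

lemma chiMap_mul {F : Type*} [CommRing F] {n r : ℕ} (σ τ : Fin r → ℕ)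
    (x : Fin r → Fin n → F) : chiMap σ x * chiMap τ x = chiMap (σ + τ) x := by
  funext j
  simp [chiMap, pow_add, Finset.prod_mul_distrib]

/-- The trace bilinear form on `Fⁿ`. -/
noncomputable def trForm (F : Type*) [Field F] (n : ℕ) :
    LinearMap.BilinForm F (Fin n → F) :=
  LinearMap.mk₂ F (fun u v => ∑ j, u j * v j)
    (fun u u' v => by simp [add_mul, Finset.sum_add_distrib])
    (fun c u v => by simp [Finset.mul_sum, mul_assoc])
    (fun u v v' => by simp [mul_add, Finset.sum_add_distrib])
    (fun c u v => by simp only [smul_eq_mul, Pi.smul_apply, Finset.mul_sum]; exact Finset.sum_congr rfl fun j _ => by ring)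

@[simp] lemma trForm_apply {F : Type*} [Field F] {n : ℕ} (u v : Fin n → F) :
    trForm F n u v = ∑ j, u j * v j := rfl

lemma trForm_refl (F : Type*) [Field F] (n : ℕ) : (trForm F n).IsRefl := by
  intro u v h
  simpa [mul_comm] using h

lemma trForm_nondegenerate (F : Type*) [Field F] (n : ℕ) : (trForm F n).Nondegenerate := by
  refine (LinearMap.IsRefl.nondegenerate_iff_separatingLeft (trForm_refl F n)).mpr ?_
  intro u hu
  funext j
  simpa [Pi.single_apply, Finset.mul_sum] using hu (Pi.single j 1)

/-- Coordinatewise multiplication by `w` as a linear map. -/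
def mulW {F : Type*} [Field F] {n : ℕ} (w : Fin n → F) :
    (Fin n → F) →ₗ[F] (Fin n → F) where
  toFun v := v * w
  map_add' v v' := by funext j; simp [add_mul]
  map_smul' c v := by funext j; simp [mul_assoc]

/-- if the vectors `χ_σ(x)`, `σ ∈ Σ`, span a subspace of dimension `> n/2`,
then the orthogonal complement (for the trace pairing) of the span of the
`χ_σ(x)`, `σ ∈ Σ + Σ`, is contained in a coordinate hyperplane. -/
theorem orthogonal_complement_in_coordinate_hyperplane
    (F : Type*) [Field F] [CharZero F] (n r : ℕ) (hn : 1 ≤ n) (hr : 1 ≤ r)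
    (x : Fin r → Fin n → F) (S : Set (Fin r → ℕ)) (hS : S.Finite)
    (hspan : n < 2 * finrank F (Submodule.span F ((fun σ => chiMap σ x) '' S))) :
    ∃ j : Fin n, ∀ w : Fin n → F,
      (∀ u ∈ Submodule.span F ((fun σ => chiMap σ x) '' (S + S)), trMap (u * w) = 0) →
      w j = 0 := by
  set V := Submodule.span F ((fun σ => chiMap σ x) '' S) with hV
  set W := Submodule.span F ((fun σ => chiMap σ x) '' (S + S)) with hW
  -- products of elements of V lie in W
  have hprod : ∀ a ∈ V, ∀ b ∈ V, a * b ∈ W := by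
    intro a ha
    induction ha using Submodule.span_induction with
    | mem a ha =>
      intro b hb
      induction hb using Submodule.span_induction with
      | mem b hb =>
        obtain ⟨σ, hσ, rfl⟩ := ha
        obtain ⟨τ, hτ, rfl⟩ := hb
        rw [chiMap_mul]
        exact Submodule.subset_span ⟨σ + τ, Set.add_mem_add hσ hτ, rfl⟩
      | zero => simpa using W.zero_mem
      | add y z _ _ hy hz => rw [mul_add]; exact W.add_mem hy hz
      | smul c y _ hy => rw [mul_smul_comm]; exact W.smul_mem c hy
    | zero => intro b _; simpa using W.zero_mem
    | add y z _ _ hy hz => intro b hb; rw [add_mul]; exact W.add_mem (hy b hb) (hz b hb)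
    | smul c y _ hy => intro b hb; rw [smul_mul_assoc]; exact W.smul_mem c (hy b hb)
  -- key: every w in the orthogonal complement of W has a zero coordinate
  have key : ∀ w : Fin n → F,
      (∀ u ∈ W, trMap (u * w) = 0) → ∃ j, w j = 0 := by
    intro w hw
    by_contra h
    push_neg at h
    -- multiplication by w is injective
    have hinj : Function.Injective (mulW (F := F) w) := by
      rw [← LinearMap.ker_eq_bot]
      rw [Submodule.eq_bot_iff]
      intro v hv
      funext j
      have : v j * w j = 0 := congrFun (LinearMap.mem_ker.mp hv) j
      exact (mul_eq_zero.mp this).resolve_right (h j)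
    have hdim : finrank F (V.map (mulW (F := F) w)) = finrank F V :=
      (Submodule.equivMapOfInjective _ hinj V).finrank_eq.symm
    -- V.map (mulW w) is orthogonal to V
    have hle : V.map (mulW (F := F) w) ≤ (trForm F n).orthogonal V := by
      rintro _ ⟨v, hv, rfl⟩
      rw [LinearMap.BilinForm.mem_orthogonal_iff]
      intro y hy
      have : trMap ((y * v) * w) = 0 := hw _ (hprod y hy v hv)
      simpa [LinearMap.BilinForm.IsOrtho, mulW, trMap, mul_assoc, Finset.sum_congr] using this
    have h1 : finrank F ((trForm F n).orthogonal V) =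
        finrank F (Fin n → F) - finrank F V :=
      LinearMap.BilinForm.finrank_orthogonal (trForm_nondegenerate F n) V
    have h2 : finrank F (V.map (mulW (F := F) w)) ≤ finrank F ((trForm F n).orthogonal V) :=
      Submodule.finrank_mono hle
    have h3 : finrank F V ≤ finrank F (Fin n → F) := Submodule.finrank_le V
    rw [hdim, h1, finrank_fintype_fun_eq_card, Fintype.card_fin] at h2
    rw [finrank_fintype_fun_eq_card, Fintype.card_fin] at h3
    omega
  -- the orthogonal complement of W is covered by the coordinate kernels
  set K := (trForm F n).orthogonal W with hK
  have hKmem : ∀ w : Fin n → F, (∀ u ∈ W, trMap (u * w) = 0) ↔ w ∈ K := by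
    intro w
    rw [hK, LinearMap.BilinForm.mem_orthogonal_iff]
    constructor
    · intro hw u hu
      have := hw u hu
      simpa [LinearMap.BilinForm.IsOrtho, trMap] using this
    · intro hw u hu
      have := hw u hu
      simpa [LinearMap.BilinForm.IsOrtho, trMap] using this
  have hcover : ⋃ j : Fin n,
      ((LinearMap.ker ((LinearMap.proj j).comp K.subtype) : Submodule F K) : Set K)
        = Set.univ := by
    ext w
    simp only [Set.mem_iUnion, Set.mem_univ, iff_true, SetLike.mem_coe, LinearMap.mem_ker,
      LinearMap.comp_apply, LinearMap.proj_apply, Submodule.coe_subtype]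
    exact key w.1 ((hKmem w.1).mpr w.2)
  obtain ⟨j, hj⟩ := Subspace.exists_eq_top_of_iUnion_eq_univ hcover
  refine ⟨j, fun w hw => ?_⟩
  have hwK : w ∈ K := (hKmem w).mp hw
  have : (⟨w, hwK⟩ : K) ∈ (⊤ : Submodule F K) := Submodule.mem_top
  rw [← hj] at this
  simpa using this
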